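/- Let x ∈ R^p be nonzero, T ∈ {1,...,p}, and c > 0. If T ≥ c·s(x)·log(p), then the T-term approximation error satisfies (1/√T)·‖x − x_T‖₁/‖x‖₂ ≤ (1/√(c·log p))·(1 − T/p). -/

import Mathlib

/-- If `T ≥ c·s(x)·log p`, then the `T`-term approximation error satisfies
`(1/√T)·‖x − x_T‖₁/‖x‖₂ ≤ (1/√(c·log p))·(1 − T/p)`. -/
theorem approx_error_upper_bound (p T : ℕ) (hT1 : 1 ≤ T) (hTp : T ≤ p)
    (x : Fin p → ℝ) (hx : x ≠ 0) (S : Finset (Fin p)) (hS : S.card = T)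
    (hbig : ∀ i ∈ S, ∀ j ∉ S, |x j| ≤ |x i|) (c : ℝ) (hc : 0 < c)
    (hT : c * ((∑ i, |x i|) ^ 2 / (∑ i, (x i) ^ 2)) * Real.log p ≤ (T : ℝ)) :
    (1 / Real.sqrt T) *
        ((∑ i, |x i - (if i ∈ S then x i else 0)|) / Real.sqrt (∑ i, (x i) ^ 2)) ≤
      (1 / Real.sqrt (c * Real.log p)) * (1 - (T : ℝ) / p) := by
  have hsum : ∑ i, |x i - (if i ∈ S then x i else 0)| = ∑ i ∈ Sᶜ, |x i| := by
    rw [← Finset.sum_compl_add_sum S (fun i => |x i - (if i ∈ S then x i else 0)|)]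
    have h1 : ∀ i ∈ Sᶜ, |x i - (if i ∈ S then x i else 0)| = |x i| := by
      intro i hi
      rw [Finset.mem_compl] at hi
      simp [hi]
    have h2 : ∀ i ∈ S, |x i - (if i ∈ S then x i else 0)| = 0 := by
      intro i hi; simp [hi]
    rw [Finset.sum_congr rfl h1, Finset.sum_congr rfl h2]
    simp
  rw [hsum]
  set A := ∑ i, |x i| with hA
  set Q := ∑ i, (x i) ^ 2 with hQ
  set tail := ∑ i ∈ Sᶜ, |x i| with htail
  have hQpos : 0 < Q := by
    obtain ⟨i, hi⟩ := Function.ne_iff.mp hx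
    exact Finset.sum_pos' (fun j _ => sq_nonneg _)
      ⟨i, Finset.mem_univ i, by
        have : 0 < |x i| := abs_pos.mpr hi
        nlinarith [this, sq_abs (x i)]⟩
  by_cases hTeq : T = p
  · -- S = univ, tail = 0, RHS factor = 0
    have hSuniv : S = Finset.univ := by
      apply Finset.eq_univ_of_card
      rw [hS, Fintype.card_fin, hTeq]
    have : tail = 0 := by simp [htail, hSuniv]
    rw [this, hTeq]
    have hp : (p:ℝ) ≠ 0 := by
      have : (1:ℕ) ≤ p := le_trans hT1 hTp
      exact_mod_cast Nat.pos_of_ne_zero (by omega) |>.ne'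
    simp [hp]
  · -- T < p
    have hTlt : T < p := lt_of_le_of_ne hTp hTeq
    have hp2 : (2:ℕ) ≤ p := by omega
    have hppos : (0:ℝ) < p := by positivity
    have hlogpos : 0 < Real.log p := Real.log_pos (by exact_mod_cast hp2.trans_lt' one_lt_two)
    have hTpos : (0:ℝ) < T := by exact_mod_cast hT1
    have hclog : 0 < c * Real.log p := mul_pos hc hlogpos
    have hD : 0 < Real.sqrt (c * Real.log p) := Real.sqrt_pos.mpr hclog
    have hsT : 0 < Real.sqrt T := Real.sqrt_pos.mpr hTpos
    have hsQ : 0 < Real.sqrt Q := Real.sqrt_pos.mpr hQpos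
    -- key combinatorial inequality
    have hcard : ((Sᶜ).card : ℝ) = (p:ℝ) - T := by
      rw [Finset.card_compl, hS, Fintype.card_fin]
      push_cast [Nat.cast_sub hTp]
      ring
    have hkey : (T:ℝ) * tail ≤ ((p:ℝ) - T) * ∑ i ∈ S, |x i| := by
      have step : ∀ i ∈ S, tail ≤ ((p:ℝ) - T) * |x i| := by
        intro i hi
        calc tail = ∑ j ∈ Sᶜ, |x j| := rfl
          _ ≤ ∑ j ∈ Sᶜ, |x i| := by
              apply Finset.sum_le_sum
              intro j hj
              exact hbig i hi j (Finset.mem_compl.mp hj)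
          _ = ((p:ℝ) - T) * |x i| := by rw [Finset.sum_const, nsmul_eq_mul, hcard]
      calc (T:ℝ) * tail = ∑ _i ∈ S, tail := by
            rw [Finset.sum_const, nsmul_eq_mul, hS]
        _ ≤ ∑ i ∈ S, ((p:ℝ) - T) * |x i| := Finset.sum_le_sum step
        _ = ((p:ℝ) - T) * ∑ i ∈ S, |x i| := by rw [Finset.mul_sum]
    have hAsplit : A = ∑ i ∈ S, |x i| + tail := by
      rw [hA, htail, ← Finset.sum_add_sum_compl S]
    have htailnn : 0 ≤ tail := Finset.sum_nonneg fun i _ => abs_nonneg _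
    have hSnn : 0 ≤ ∑ i ∈ S, |x i| := Finset.sum_nonneg fun i _ => abs_nonneg _
    have hAnn : 0 ≤ A := by rw [hAsplit]; positivity
    have h1 : (p:ℝ) * tail ≤ ((p:ℝ) - T) * A := by nlinarith [hkey, htailnn]
    have hfrac : 0 ≤ 1 - (T:ℝ)/p := by
      rw [sub_nonneg, div_le_one hppos]
      exact_mod_cast hTp
    have htailA : tail ≤ (1 - (T:ℝ)/p) * A := by
      have hid : (1 - (T:ℝ)/p) * (p:ℝ) = (p:ℝ) - T := by field_simp
      nlinarith [h1]
    -- A * √(c log p) ≤ √T * √Q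
    have hAQ : A ^ 2 * (c * Real.log p) ≤ (T:ℝ) * Q := by
      have h2 := mul_le_mul_of_nonneg_right hT hQpos.le
      calc A ^ 2 * (c * Real.log p) = c * (A ^ 2 / Q) * Real.log p * Q := by
            field_simp
        _ ≤ (T:ℝ) * Q := h2
    have hAD : A * Real.sqrt (c * Real.log p) ≤ Real.sqrt T * Real.sqrt Q := by
      have e1 : A * Real.sqrt (c * Real.log p) = Real.sqrt (A ^ 2 * (c * Real.log p)) := by
        rw [Real.sqrt_mul (sq_nonneg A), Real.sqrt_sq hAnn]
      have e2 : Real.sqrt T * Real.sqrt Q = Real.sqrt ((T:ℝ) * Q) :=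
        (Real.sqrt_mul hTpos.le Q).symm
      rw [e1, e2]
      exact Real.sqrt_le_sqrt hAQ
    -- combine
    rw [one_div_mul_eq_div, div_div, one_div_mul_eq_div, div_le_div_iff₀
      (by positivity) hD]
    calc tail * Real.sqrt (c * Real.log p)
        ≤ ((1 - (T:ℝ)/p) * A) * Real.sqrt (c * Real.log p) := by
          apply mul_le_mul_of_nonneg_right htailA hD.le
      _ = (1 - (T:ℝ)/p) * (A * Real.sqrt (c * Real.log p)) := by ring
      _ ≤ (1 - (T:ℝ)/p) * (Real.sqrt T * Real.sqrt Q) := by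
          apply mul_le_mul_of_nonneg_left hAD hfrac
      _ = (1 - (T:ℝ)/p) * (Real.sqrt Q * Real.sqrt T) := by ring
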